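/- Let p(x) = Π_{j=1}^n (x−x_j) with coefficients c = (c_n,...,c_0)^T reversed, and suppose c_n = 1. Define X_k as the power sums of the x_j (X_0 = K). Then X = K·e_1 − T(c)^{-1} Λ c, where X = (X_0,...,X_K)^T, c ∈ R^{K+1} is the zero-padded reversed coefficient vector, Λ = diag(0,...,K), and e_1 is the first standard basis vector. -/

import Mathlib

open Matrix Finset

section auxpoly
open Polynomial

lemma deriv_prod_X_sub_C {ι : Type*} [DecidableEq ι] (s : Finset ι) (y : ι → ℝ) :
    derivative (∏ i ∈ s, (X - C (y i))) = ∑ i ∈ s, ∏ k ∈ s.erase i, (X - C (y k)) := by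
  induction s using Finset.induction_on with
  | empty => simp
  | insert a s ha ih =>
    rw [Finset.prod_insert ha, derivative_mul, derivative_X_sub_C, one_mul, ih,
      Finset.sum_insert ha, Finset.erase_insert ha, Finset.mul_sum]
    congr 1
    refine Finset.sum_congr rfl fun i hi => ?_
    rw [Finset.erase_insert_of_ne (fun h : a = i => ha (h ▸ hi)),
      Finset.prod_insert (fun h => ha (Finset.mem_of_mem_erase h))]

lemma sum_Icc_shift (f : ℕ → ℝ) (a b : ℕ) :
    ∑ m ∈ Finset.Icc a b, f m = ∑ j ∈ Finset.range (b + 1 - a), f (a + j) := by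
  apply Finset.sum_nbij' (fun m => m - a) (fun j => a + j) <;> intros <;>
    simp_all [Finset.mem_Icc, Finset.mem_range] <;> omega

lemma coeffQ {n : ℕ} (cc : ℕ → ℝ) (k : ℕ) (hk : k ≤ n) :
    (∑ i ∈ Finset.range (n + 1), C (cc i) * X ^ i : ℝ[X]).coeff k = cc k := by
  rw [Polynomial.finset_sum_coeff]
  simp only [coeff_C_mul, coeff_X_pow, mul_ite, mul_one, mul_zero]
  rw [Finset.sum_ite_eq (Finset.range (n + 1)) k cc]
  simp [Nat.lt_succ_of_le hk]

section
variable {n : ℕ} (x : Fin n → ℝ) (cc : ℕ → ℝ)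
  (hp : ∀ t : ℝ, ∏ j, (t - x j) = ∑ i ∈ Finset.range (n + 1), cc i * t ^ i)
include hp

lemma key_poly : (∏ j, (X - C (x j)) : ℝ[X]) = ∑ i ∈ Finset.range (n + 1), C (cc i) * X ^ i := by
  apply Polynomial.funext
  intro r
  simp [eval_prod, eval_finset_sum, hp r]

lemma hroot (l : Fin n) : ∑ m ∈ Finset.range (n + 1), cc m * x l ^ m = 0 := by
  rw [← hp (x l)]
  exact Finset.prod_eq_zero (Finset.mem_univ l) (sub_self _)

lemma hccn : cc n = 1 := by
  have hP := key_poly x cc hp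
  have hm : (∏ j, (X - C (x j)) : ℝ[X]).Monic :=
    monic_prod_of_monic _ _ fun j _ => monic_X_sub_C _
  have hd : (∏ j, (X - C (x j)) : ℝ[X]).natDegree = n := by
    rw [natDegree_prod_of_monic _ _ fun j _ => monic_X_sub_C _]
    simp
  have h := hm.coeff_natDegree
  rw [hd, hP] at h
  rw [Polynomial.finset_sum_coeff] at h
  simp only [coeff_C_mul, coeff_X_pow, mul_ite, mul_one, mul_zero] at h
  rwa [Finset.sum_ite_eq (Finset.range (n + 1)) n cc, if_pos (Finset.self_mem_range_succ n)] at h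
end

section
variable {n : ℕ} (x : Fin n → ℝ) (cc : ℕ → ℝ)
  (hp : ∀ t : ℝ, ∏ j, (t - x j) = ∑ i ∈ Finset.range (n + 1), cc i * t ^ i)
include hp

lemma coeffQ' (k : ℕ) (hk : k ≤ n) :
    (∑ i ∈ Finset.range (n + 1), C (cc i) * X ^ i : ℝ[X]).coeff k = cc k := by
  rw [Polynomial.finset_sum_coeff]
  simp only [coeff_C_mul, coeff_X_pow, mul_ite, mul_one, mul_zero]
  rw [Finset.sum_ite_eq (Finset.range (n + 1)) k cc]
  simp [Nat.lt_succ_of_le hk]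

lemma newton (e : ℕ) (he : e < n) :
    ((e : ℝ) + 1) * cc (e + 1) =
      ∑ m ∈ Finset.Icc (e + 1) n, cc m * ∑ l, x l ^ (m - (e + 1)) := by
  classical
  have hPQ := key_poly x cc hp
  set R : Fin n → ℝ[X] := fun l =>
    ∑ m ∈ Finset.range (n + 1), C (cc m) * ∑ a ∈ Finset.range m, X ^ a * C (x l) ^ (m - 1 - a)
    with hRdef
  have hR : ∀ l, ∏ k ∈ Finset.univ.erase l, (X - C (x k)) = R l := by
    intro l
    have h1 : (X - C (x l)) * ∏ k ∈ Finset.univ.erase l, (X - C (x k)) =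
        ∏ j, (X - C (x j)) :=
      Finset.mul_prod_erase Finset.univ (fun k => X - C (x k)) (Finset.mem_univ l)
    have h2 : (X - C (x l)) * R l = ∏ j, (X - C (x j)) := by
      rw [hRdef, Finset.mul_sum]
      have hterm : ∀ m ∈ Finset.range (n + 1),
          (X - C (x l)) * (C (cc m) * ∑ a ∈ Finset.range m, X ^ a * C (x l) ^ (m - 1 - a))
          = C (cc m) * X ^ m - C (cc m * x l ^ m) := by
        intro m _
        calc (X - C (x l)) * (C (cc m) * ∑ a ∈ Finset.range m, X ^ a * C (x l) ^ (m - 1 - a))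
            = C (cc m) * ((∑ a ∈ Finset.range m, X ^ a * C (x l) ^ (m - 1 - a)) * (X - C (x l))) := by
              ring
          _ = C (cc m) * (X ^ m - C (x l) ^ m) := by rw [geom_sum₂_mul]
          _ = C (cc m) * X ^ m - C (cc m * x l ^ m) := by
              rw [mul_sub, ← C_pow, ← C_mul]
      rw [Finset.sum_congr rfl hterm, Finset.sum_sub_distrib, ← map_sum C, hroot x cc hp l,
        map_zero, sub_zero, ← hPQ]
    exact mul_left_cancel₀ (X_sub_C_ne_zero (x l)) (h1.trans h2.symm)
  have hD : derivative (∏ j, (X - C (x j)) : ℝ[X]) = ∑ l, R l := by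
    rw [deriv_prod_X_sub_C]
    exact Finset.sum_congr rfl fun l _ => hR l
  have hRc : ∀ l, (R l).coeff e = ∑ m ∈ Finset.Icc (e + 1) n, cc m * x l ^ (m - (e + 1)) := by
    intro l
    rw [hRdef, Polynomial.finset_sum_coeff]
    have hterm : ∀ m ∈ Finset.range (n + 1),
        (C (cc m) * ∑ a ∈ Finset.range m, X ^ a * C (x l) ^ (m - 1 - a)).coeff e
        = if e + 1 ≤ m then cc m * x l ^ (m - (e + 1)) else 0 := by
      intro m _
      rw [coeff_C_mul, Polynomial.finset_sum_coeff]
      have h2 : ∀ a ∈ Finset.range m, (X ^ a * C (x l) ^ (m - 1 - a)).coeff e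
          = if a = e then x l ^ (m - 1 - a) else 0 := by
        intro a _
        rw [← C_pow, mul_comm, coeff_C_mul, coeff_X_pow]
        by_cases h : a = e
        · simp [h]
        · rw [if_neg (fun hh : e = a => h hh.symm)]
          simp [h]
      rw [Finset.sum_congr rfl h2, Finset.sum_ite_eq' (Finset.range m) e]
      simp only [Finset.mem_range, mul_ite, mul_zero]
      by_cases h : e < m
      · rw [if_pos h, if_pos (by omega), show m - 1 - e = m - (e + 1) by omega]
      · rw [if_neg h, if_neg (by omega)]
    rw [Finset.sum_congr rfl hterm, ← Finset.sum_filter]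
    congr 1
    ext m
    simp only [Finset.mem_filter, Finset.mem_range, Finset.mem_Icc]
    omega
  calc ((e : ℝ) + 1) * cc (e + 1)
      = (derivative (∏ j, (X - C (x j)) : ℝ[X])).coeff e := by
        rw [coeff_derivative, hPQ, coeffQ' x cc hp (e + 1) he]
        push_cast
        ring
    _ = ∑ l, (R l).coeff e := by rw [hD, Polynomial.finset_sum_coeff]
    _ = ∑ l, ∑ m ∈ Finset.Icc (e + 1) n, cc m * x l ^ (m - (e + 1)) :=
        Finset.sum_congr rfl fun l _ => hRc l
    _ = ∑ m ∈ Finset.Icc (e + 1) n, cc m * ∑ l, x l ^ (m - (e + 1)) := by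
        rw [Finset.sum_comm]
        exact Finset.sum_congr rfl fun m _ => (Finset.mul_sum _ _ _).symm

lemma keylem (i : ℕ) :
    ∑ j ∈ Finset.range (i + 1),
        (if i - j ≤ n then cc (n - (i - j)) else 0) * ∑ l, x l ^ j
      = ((n : ℝ) - i) * (if i ≤ n then cc (n - i) else 0) := by
  by_cases hin : i < n
  · have h1 : ∀ j ∈ Finset.range (i + 1),
        (if i - j ≤ n then cc (n - (i - j)) else 0) * ∑ l, x l ^ j
        = cc (n - i + j) * ∑ l, x l ^ j := by
      intro j hj
      rw [Finset.mem_range] at hj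
      rw [if_pos (by omega), show n - (i - j) = n - i + j by omega]
    rw [Finset.sum_congr rfl h1, if_pos (by omega : i ≤ n)]
    have hnewton := newton x cc hp (n - i - 1) (by omega)
    rw [show n - i - 1 + 1 = n - i by omega, sum_Icc_shift,
      show n + 1 - (n - i) = i + 1 by omega] at hnewton
    have h2 : ∀ j ∈ Finset.range (i + 1),
        cc (n - i + j) * ∑ l, x l ^ (n - i + j - (n - i))
        = cc (n - i + j) * ∑ l, x l ^ j := by
      intro j _
      rw [show n - i + j - (n - i) = j by omega]
    rw [Finset.sum_congr rfl h2] at hnewton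
    rw [← hnewton, Nat.cast_sub (by omega : 1 ≤ n - i), Nat.cast_sub (by omega : i ≤ n)]
    push_cast
    ring_nf
  · have hRHS : ((n : ℝ) - i) * (if i ≤ n then cc (n - i) else 0) = 0 := by
      by_cases h : i ≤ n
      · rw [show i = n by omega]
        simp
      · simp [h]
    rw [hRHS]
    have hsub : ∑ j ∈ Finset.Icc (i - n) i,
        (if i - j ≤ n then cc (n - (i - j)) else 0) * ∑ l, x l ^ j
        = ∑ j ∈ Finset.range (i + 1),
          (if i - j ≤ n then cc (n - (i - j)) else 0) * ∑ l, x l ^ j := by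
      apply Finset.sum_subset
      · intro j hj
        rw [Finset.mem_Icc] at hj
        rw [Finset.mem_range]
        omega
      · intro j hj hj'
        rw [Finset.mem_range] at hj
        rw [Finset.mem_Icc] at hj'
        rw [if_neg (by omega), zero_mul]
    rw [← hsub, sum_Icc_shift, show i + 1 - (i - n) = n + 1 by omega]
    have h3 : ∀ t ∈ Finset.range (n + 1),
        (if i - (i - n + t) ≤ n then cc (n - (i - (i - n + t))) else 0) * ∑ l, x l ^ (i - n + t)
        = cc t * ∑ l, x l ^ (i - n) * x l ^ t := by
      intro t ht
      rw [Finset.mem_range] at ht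
      rw [if_pos (by omega), show n - (i - (i - n + t)) = t by omega]
      congr 1
      exact Finset.sum_congr rfl fun l _ => by rw [← pow_add, show i - n + t = i - n + t from rfl]
    rw [Finset.sum_congr rfl h3]
    calc ∑ t ∈ Finset.range (n + 1), cc t * ∑ l, x l ^ (i - n) * x l ^ t
        = ∑ t ∈ Finset.range (n + 1), ∑ l, x l ^ (i - n) * (cc t * x l ^ t) := by
          refine Finset.sum_congr rfl fun t _ => ?_
          rw [Finset.mul_sum]
          exact Finset.sum_congr rfl fun l _ => by ring
      _ = ∑ l, x l ^ (i - n) * ∑ t ∈ Finset.range (n + 1), cc t * x l ^ t := by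
          rw [Finset.sum_comm]
          exact Finset.sum_congr rfl fun l _ => (Finset.mul_sum _ _ _).symm
      _ = 0 := by
          simp [hroot x cc hp]
end

end auxpoly

/-- Lower triangular Toeplitz matrix generated by a vector. -/
def LTT {n : ℕ} (x : Fin n → ℝ) : Matrix (Fin n) (Fin n) ℝ :=
  Matrix.of fun i j =>
    if h : (j : ℕ) ≤ (i : ℕ) then
      x ⟨(i : ℕ) - (j : ℕ), Nat.lt_of_le_of_lt (Nat.sub_le _ _) i.isLt⟩
    else 0

/-- The diagonal matrix diag(0,1,...,n-1). -/
def Lam (n : ℕ) : Matrix (Fin n) (Fin n) ℝ :=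
  Matrix.diagonal fun i => (i : ℝ)

theorem powerSums_from_coeffs {n : ℕ} (x : Fin n → ℝ) (cc : ℕ → ℝ)
    (hp : ∀ t : ℝ, ∏ j, (t - x j) = ∑ i ∈ Finset.range (n + 1), cc i * t ^ i)
    (c : Fin (2 * n + 1) → ℝ)
    (hc : ∀ i : Fin (2 * n + 1), c i = if (i : ℕ) ≤ n then cc (n - (i : ℕ)) else 0)
    (X : Fin (2 * n + 1) → ℝ)
    (hX0 : X 0 = (2 * n : ℝ))
    (hXk : ∀ k : Fin (2 * n + 1), (k : ℕ) ≠ 0 → X k = ∑ j, x j ^ (k : ℕ)) :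
    X = (2 * n : ℝ) • (Pi.single 0 1 : Fin (2 * n + 1) → ℝ) - (LTT c)⁻¹ *ᵥ (Lam (2 * n + 1) *ᵥ c) := by
  classical
  have hc1 : cc n = 1 := hccn x cc hp
  have hMij : ∀ i j : Fin (2 * n + 1), LTT c i j =
      if (j : ℕ) ≤ (i : ℕ) then
        (if (i : ℕ) - (j : ℕ) ≤ n then cc (n - ((i : ℕ) - (j : ℕ))) else 0) else 0 := by
    intro i j
    by_cases h : (j : ℕ) ≤ (i : ℕ)
    · rw [show LTT c i j = c ⟨(i : ℕ) - (j : ℕ), Nat.lt_of_le_of_lt (Nat.sub_le _ _) i.isLt⟩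
        from dif_pos h, if_pos h, hc]
    · rw [show LTT c i j = 0 from dif_neg h, if_neg h]
  have hdet : (LTT c).det = 1 := by
    rw [Matrix.det_of_lowerTriangular (LTT c)
      (fun i j h => by
        rw [hMij, if_neg (not_le.2 (Fin.lt_iff_val_lt_val.mp (OrderDual.toDual_lt_toDual.mp h)))])]
    have hdiag : ∀ i : Fin (2 * n + 1), LTT c i i = 1 := by
      intro i
      rw [hMij, if_pos le_rfl, Nat.sub_self, if_pos (Nat.zero_le n), Nat.sub_zero, hc1]
    simp [hdiag]
  have hu : IsUnit (LTT c).det := by rw [hdet]; exact isUnit_one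
  set w : Fin (2 * n + 1) → ℝ := (2 * n : ℝ) • (Pi.single 0 1 : Fin (2 * n + 1) → ℝ) - X with hw
  have hMw : LTT c *ᵥ w = Lam (2 * n + 1) *ᵥ c := by
    funext i
    have hR : (Lam (2 * n + 1) *ᵥ c) i = (i : ℕ) * c i := by
      rw [Lam, Matrix.mulVec_diagonal]
    rw [hR]
    have hterm : ∀ j : Fin (2 * n + 1), LTT c i j * w j =
        (fun j : ℕ => (if j ≤ (i : ℕ) then
          (if (i : ℕ) - j ≤ n then cc (n - ((i : ℕ) - j)) else 0) else 0) *
          (if j = 0 then 0 else -(∑ l, x l ^ j))) (j : ℕ) := by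
      intro j
      rw [hMij]
      simp only
      congr 1
      by_cases hj : j = 0
      · subst hj
        simp [hw, hX0, Fin.val_zero]
      · have hj' : (j : ℕ) ≠ 0 := fun h => hj (Fin.ext (by simp [h]))
        rw [if_neg hj']
        simp [hw, Pi.single_eq_of_ne hj, hXk j hj']
    have hsum : (LTT c *ᵥ w) i = ∑ j ∈ Finset.range (2 * n + 1),
        (if j ≤ (i : ℕ) then
          (if (i : ℕ) - j ≤ n then cc (n - ((i : ℕ) - j)) else 0) else 0) *
          (if j = 0 then 0 else -(∑ l, x l ^ j)) := by
      rw [Matrix.mulVec, dotProduct, Finset.sum_congr rfl fun j _ => hterm j]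
      exact Fin.sum_univ_eq_sum_range (fun j : ℕ => (if j ≤ (i : ℕ) then
        (if (i : ℕ) - j ≤ n then cc (n - ((i : ℕ) - j)) else 0) else 0) *
        (if j = 0 then 0 else -(∑ l, x l ^ j))) (2 * n + 1)
    rw [hsum, ← Finset.sum_subset (Finset.range_subset_range.2 (by omega : (i : ℕ) + 1 ≤ 2 * n + 1))
      (fun j hj hj' => by
        rw [Finset.mem_range] at hj'
        rw [if_neg (by omega), zero_mul])]
    have hsplit : ∀ j ∈ Finset.range ((i : ℕ) + 1),
        (if j ≤ (i : ℕ) then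
          (if (i : ℕ) - j ≤ n then cc (n - ((i : ℕ) - j)) else 0) else 0) *
          (if j = 0 then 0 else -(∑ l, x l ^ j))
        = -((if (i : ℕ) - j ≤ n then cc (n - ((i : ℕ) - j)) else 0) * ∑ l, x l ^ j)
          + (if j = 0 then (if (i : ℕ) ≤ n then cc (n - (i : ℕ)) else 0) * n else 0) := by
      intro j hj
      rw [Finset.mem_range] at hj
      rw [if_pos (by omega : j ≤ (i : ℕ))]
      by_cases hj0 : j = 0
      · subst hj0
        simp only [reduceIte, Nat.sub_zero, mul_zero,
          show (∑ l, x l ^ (0 : ℕ)) = (n : ℝ) by simp [Finset.card_univ]]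
        ring
      · rw [if_neg hj0, if_neg hj0, add_zero]
        ring
    rw [Finset.sum_congr rfl hsplit, Finset.sum_add_distrib, Finset.sum_neg_distrib,
      keylem x cc hp (i : ℕ), Finset.sum_ite_eq' (Finset.range ((i : ℕ) + 1)) 0
        (fun _ => (if (i : ℕ) ≤ n then cc (n - (i : ℕ)) else 0) * n),
      if_pos (Finset.mem_range.2 (by omega)), hc]
    ring
  have hinv : (LTT c)⁻¹ *ᵥ (Lam (2 * n + 1) *ᵥ c) = w := by
    rw [← hMw, Matrix.mulVec_mulVec, Matrix.nonsing_inv_mul _ hu, Matrix.one_mulVec]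
  rw [hinv, hw, sub_sub_cancel]
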